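/- Let α > 0 and let θ be a character of G of level N ≥ 1. Then the function x ↦ θ(x) − 1 is ν-integrable and ∫_G (θ(x) − 1) dν(x) = −q^{α·N·m_N}. (This identifies ν as the Lévy measure density of the process generated by −D^α: the locally spherically symmetric measure with density ν_l on V_l \ V_{l+1} reproduces the symbol −q^{α·N·m_N} in the Lévy–Khinchine formula.) -/

import Mathlib

open MeasureTheory Filter Topology

/-- A (unitary) continuous character of a topological group, with values in `ℂ`. -/
def UnitaryCharacter (G : Type*) [Group G] [TopologicalSpace G] :=
  {θ : G → ℂ // Continuous θ ∧ (∀ a b : G, θ (a * b) = θ a * θ b) ∧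
    ∀ a : G, ‖θ a‖ = 1}

/-- Orthogonality: a character nontrivial on an open subgroup integrates to zero on it. -/
lemma aux_orth {G : Type*} [CommGroup G] [TopologicalSpace G] [IsTopologicalGroup G]
    [MeasurableSpace G] [BorelSpace G]
    (μ : Measure G) [μ.IsMulLeftInvariant]
    (θ : G → ℂ) (hθmul : ∀ a b : G, θ (a * b) = θ a * θ b)
    (V : Subgroup G) (hV : MeasurableSet (V : Set G))
    (y : G) (hy : y ∈ V) (hθy : θ y ≠ 1) :
    ∫ x in (V : Set G), θ x ∂μ = 0 := by
  have h1 : ∫ x, (V : Set G).indicator θ (y * x) ∂μ = ∫ x, (V : Set G).indicator θ x ∂μ :=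
    integral_mul_left_eq_self _ y
  have h2 : ∀ x : G, (V : Set G).indicator θ (y * x) = θ y * (V : Set G).indicator θ x := by
    intro x
    by_cases hx : x ∈ V
    · rw [Set.indicator_of_mem hx, Set.indicator_of_mem (V.mul_mem hy hx), hθmul]
    · rw [Set.indicator_of_notMem hx, Set.indicator_of_notMem, mul_zero]
      intro h
      exact hx (by simpa using V.mul_mem (V.inv_mem hy) h)
  simp_rw [h2, integral_const_mul] at h1
  have := sub_eq_zero.mpr h1
  rw [← sub_one_mul] at this
  rcases mul_eq_zero.mp this with h | h
  · exact absurd (sub_eq_zero.mp h) hθy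
  · rw [← integral_indicator hV]; exact h

/-- Telescoping identity. -/
lemma aux_tel (c B R : ℕ → ℂ)
    (hc0 : c 0 = B 1) (hR0 : R 0 = 1)
    (hstep : ∀ n : ℕ, (c (n + 1) - c n) * R (n + 1) = B (n + 2) - B (n + 1)) :
    ∀ n : ℕ, ∑ l ∈ Finset.range n, c l * (R l - R (l + 1)) + c n * R n = B (n + 1) := by
  intro n
  induction n with
  | zero => simpa [hR0] using hc0
  | succ n ih =>
    rw [Finset.sum_range_succ]
    linear_combination ih + hstep n

theorem stmt8
    (q : ℕ) (hq : 2 ≤ q)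
    (m : ℕ → ℕ) (hm0 : m 0 = 0) (hm1 : m 1 = 1)
    (hmgrow : ∀ n : ℕ, 1 ≤ n → 2 * m n ≤ m (n + 1))
    (G : Type*) [CommGroup G] [TopologicalSpace G] [IsTopologicalGroup G]
    [CompactSpace G] [MeasurableSpace G] [BorelSpace G]
    (μ : Measure G) [μ.IsHaarMeasure] [IsProbabilityMeasure μ]
    (V : ℕ → Subgroup G) (hVopen : ∀ n, IsOpen (V n : Set G))
    (hV0 : V 0 = ⊤) (hVdesc : ∀ n, V (n + 1) ≤ V n)
    (hVmeas : ∀ n, μ (V n : Set G) = ((q : ENNReal) ^ (n * m n))⁻¹)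
    (α : ℝ) (hα : 0 < α)
    (νs : ℕ → ℝ)
    (hνs : ∀ n : ℕ, νs n = (q : ℝ) ^ α + ∑ l ∈ Finset.Icc 1 n,
      (q : ℝ) ^ (l * m l) *
        ((q : ℝ) ^ (α * (((l + 1) * m (l + 1) : ℕ) : ℝ))
          - (q : ℝ) ^ (α * ((l * m l : ℕ) : ℝ))))
    (ν : Measure G)
    (hν : ∀ l : ℕ, ∀ Γ : Set G, MeasurableSet Γ →
      Γ ⊆ (V l : Set G) \ (V (l + 1) : Set G) → ν Γ = ENNReal.ofReal (νs l) * μ Γ)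
    (hν0 : ν (⋂ n : ℕ, (V n : Set G)) = 0)
    (θ : UnitaryCharacter G) (N : ℕ) (hN : 1 ≤ N)
    (hθtriv : ∀ y ∈ (V N : Set G), θ.1 y = 1)
    (hθnontriv : ∃ y ∈ (V (N - 1) : Set G), θ.1 y ≠ 1) :
    Integrable (fun x : G => θ.1 x - 1) ν ∧
    ∫ x : G, (θ.1 x - 1) ∂ν
      = -(((q : ℝ) ^ (α * ((N * m N : ℕ) : ℝ)) : ℝ) : ℂ) := by
  classical
  obtain ⟨hθc, hθmul, hθabs⟩ := θ.2
  obtain ⟨K, rfl⟩ : ∃ K, N = K + 1 := ⟨N - 1, (Nat.succ_pred_eq_of_pos hN).symm⟩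
  simp only [Nat.add_sub_cancel] at hθnontriv
  set f : G → ℂ := fun x => θ.1 x - 1 with hfdef
  set A : ℕ → Set G := fun l => (V l : Set G) \ (V (l + 1) : Set G) with hAdef
  -- basic positivity / arithmetic facts
  have hq0 : (0 : ℝ) < q := by positivity
  have hq1 : (1 : ℝ) ≤ q := by exact_mod_cast (by omega : 1 ≤ q)
  have hmle : ∀ n : ℕ, m n ≤ m (n + 1) := by
    intro n
    rcases Nat.eq_zero_or_pos n with h | h
    · subst h; rw [hm0]; exact Nat.zero_le _
    · exact le_trans (Nat.le_mul_of_pos_left (m n) (by norm_num)) (hmgrow n h)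
  have hnm : ∀ n : ℕ, n * m n ≤ (n + 1) * m (n + 1) :=
    fun n => Nat.mul_le_mul (Nat.le_succ n) (hmle n)
  have hνsnn : ∀ l, 0 ≤ νs l := by
    intro l
    rw [hνs l]
    refine add_nonneg (Real.rpow_nonneg hq0.le _) (Finset.sum_nonneg fun i _ => ?_)
    refine mul_nonneg (by positivity) (sub_nonneg.mpr ?_)
    refine Real.rpow_le_rpow_of_exponent_le hq1 ?_
    exact mul_le_mul_of_nonneg_left (by exact_mod_cast hnm i) hα.le
  -- group-theoretic facts
  have hanti : Antitone V := antitone_nat_of_succ_le hVdesc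
  have hWsub : ∀ {a b : ℕ}, a ≤ b → (V b : Set G) ⊆ (V a : Set G) :=
    fun h => SetLike.coe_subset_coe.mpr (hanti h)
  have hVm : ∀ n, MeasurableSet (V n : Set G) := fun n => (hVopen n).measurableSet
  have hAm : ∀ l, MeasurableSet (A l) := fun l => (hVm l).diff (hVm (l + 1))
  -- measures
  set r : ℕ → ℝ := fun n => ((q : ℝ) ^ (n * m n))⁻¹ with hrdef
  have hμV : ∀ n, (μ (V n : Set G)).toReal = r n := by
    intro n
    rw [hVmeas n]
    simp [hrdef, ENNReal.toReal_inv]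
  -- integrability w.r.t. μ
  have hθi : Integrable θ.1 μ := by
    refine Integrable.mono' (integrable_const (1 : ℝ)) hθc.aestronglyMeasurable ?_
    filter_upwards with x
    simp [hθabs x]
  have hfiμ : Integrable f μ := hθi.sub (integrable_const 1)
  -- the measure ν restricted to annuli
  have hrestrict : ∀ l, ν.restrict (A l) = ENNReal.ofReal (νs l) • μ.restrict (A l) := by
    intro l
    ext s hs
    rw [Measure.restrict_apply hs, Measure.smul_apply, Measure.restrict_apply hs,
      hν l _ (hs.inter (hAm l)) Set.inter_subset_right, smul_eq_mul]
  have hIl : ∀ l, IntegrableOn f (A l) ν := by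
    intro l
    rw [IntegrableOn, hrestrict l]
    exact (hfiμ.integrableOn).smul_measure ENNReal.ofReal_ne_top
  -- decomposition of the complement of V N
  have hcompl : ((V (K + 1) : Set G))ᶜ = ⋃ l ∈ Finset.range (K + 1), A l := by
    ext x
    simp only [Set.mem_compl_iff, Set.mem_iUnion, Finset.mem_range, exists_prop, hAdef,
      Set.mem_diff]
    constructor
    · intro hx
      have hex : ∃ n, x ∉ (V n : Set G) := ⟨K + 1, hx⟩
      have hk := Nat.find_spec hex
      have hk0 : Nat.find hex ≠ 0 := by
        intro h
        rw [h] at hk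
        exact hk (by simp [hV0])
      obtain ⟨j, hj⟩ := Nat.exists_eq_succ_of_ne_zero hk0
      have hle : Nat.find hex ≤ K + 1 := Nat.find_min' hex hx
      refine ⟨j, by omega, ?_, ?_⟩
      · by_contra h
        exact Nat.find_min hex (by omega : j < Nat.find hex) h
      · rw [hj] at hk; exact hk
    · rintro ⟨l, hl, _, hx2⟩ hxN
      exact hx2 (hWsub (by omega : l + 1 ≤ K + 1) hxN)
  have hfind : f = ((V (K + 1) : Set G))ᶜ.indicator f := by
    ext x
    by_cases hx : x ∈ (V (K + 1) : Set G)
    · rw [Set.indicator_of_notMem (by simpa using hx)]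
      simp [hfdef, hθtriv x hx]
    · exact (Set.indicator_of_mem (Set.mem_compl hx) f).symm
  -- integrability w.r.t. ν
  have hint : Integrable f ν := by
    rw [hfind, integrable_indicator_iff (hVm (K + 1)).compl, hcompl]
    exact integrableOn_finset_iUnion.mpr fun l _ => hIl l
  -- pairwise disjointness
  have hdisjlt : ∀ i j : ℕ, i < j → Disjoint (A i) (A j) := by
    intro i j hij
    refine Set.disjoint_left.mpr ?_
    rintro x ⟨-, hx2⟩ ⟨hx3, -⟩
    exact hx2 (hWsub (by omega : i + 1 ≤ j) hx3)
  have hdisj : Set.Pairwise ↑(Finset.range (K + 1)) (Function.onFun Disjoint A) := by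
    intro i _ j _ hij
    rcases lt_or_gt_of_ne hij with h | h
    · exact hdisjlt i j h
    · exact (hdisjlt j i h).symm
  -- the main decomposition of the integral
  have hmain : ∫ x, f x ∂ν = ∑ l ∈ Finset.range (K + 1), ∫ x in A l, f x ∂ν := by
    conv_lhs => rw [hfind]
    rw [integral_indicator (hVm (K + 1)).compl, hcompl,
      integral_biUnion_finset _ (fun i _ => hAm i) hdisj (fun i _ => hIl i)]
  -- scaling on each annulus
  have hsmul : ∀ l, ∫ x in A l, f x ∂ν = ((νs l : ℝ) : ℂ) * ∫ x in A l, f x ∂μ := by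
    intro l
    rw [show (∫ x in A l, f x ∂ν) = ∫ x, f x ∂(ν.restrict (A l)) from rfl, hrestrict l,
      integral_smul_measure, ENNReal.toReal_ofReal (hνsnn l), Complex.real_smul]
  -- integrals of θ over the subgroups
  have horth : ∀ n, n ≤ K → ∫ x in (V n : Set G), θ.1 x ∂μ = 0 := by
    intro n hn
    obtain ⟨y, hy, hy1⟩ := hθnontriv
    exact aux_orth μ θ.1 hθmul (V n) (hVm n) y (hWsub hn hy) hy1
  have hVNint : ∫ x in (V (K + 1) : Set G), θ.1 x ∂μ = ((r (K + 1) : ℝ) : ℂ) := by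
    rw [setIntegral_congr_fun (hVm (K + 1)) (fun x hx => hθtriv x hx), setIntegral_const,
      measureReal_def, hμV (K + 1)]
    simp
  have hAθ : ∀ l, ∫ x in A l, θ.1 x ∂μ
      = (∫ x in (V l : Set G), θ.1 x ∂μ) - ∫ x in (V (l + 1) : Set G), θ.1 x ∂μ :=
    fun l => integral_diff (hVm (l + 1)) hθi.integrableOn (hWsub (Nat.le_succ l))
  have hA1 : ∀ l, ∫ _ in A l, (1 : ℂ) ∂μ = ((r l : ℝ) : ℂ) - ((r (l + 1) : ℝ) : ℂ) := by
    intro l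
    rw [integral_diff (hVm (l + 1)) (integrable_const 1).integrableOn (hWsub (Nat.le_succ l)),
      setIntegral_const, setIntegral_const, measureReal_def, measureReal_def, hμV l, hμV (l + 1)]
    simp
  have hAf : ∀ l, ∫ x in A l, f x ∂μ
      = (∫ x in A l, θ.1 x ∂μ) - (((r l : ℝ) : ℂ) - ((r (l + 1) : ℝ) : ℂ)) := by
    intro l
    rw [← hA1 l, hfdef, ← integral_sub hθi.integrableOn (integrable_const 1).integrableOn]
  -- real version of the telescoping step
  set b : ℕ → ℝ := fun n => (q : ℝ) ^ (α * ((n * m n : ℕ) : ℝ)) with hbdef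
  have hstepR : ∀ n : ℕ, (νs (n + 1) - νs n) * r (n + 1) = b (n + 2) - b (n + 1) := by
    intro n
    have he : n + 1 + 1 = n + 2 := by omega
    have hsum : νs (n + 1) - νs n
        = (q : ℝ) ^ ((n + 1) * m (n + 1)) * (b (n + 2) - b (n + 1)) := by
      rw [hνs (n + 1), hνs n, Finset.sum_Icc_succ_top (by omega : 1 ≤ n + 1), hbdef, he]
      ring
    rw [hsum, hrdef]
    have hne : ((q : ℝ) ^ ((n + 1) * m (n + 1))) ≠ 0 := by positivity
    field_simp
  -- instantiate the telescoping lemma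
  set cC : ℕ → ℂ := fun l => ((νs l : ℝ) : ℂ) with hcCdef
  set BC : ℕ → ℂ := fun n => ((b n : ℝ) : ℂ) with hBCdef
  set RC : ℕ → ℂ := fun n => ((r n : ℝ) : ℂ) with hRCdef
  have hc0 : cC 0 = BC 1 := by
    show ((νs 0 : ℝ) : ℂ) = ((b 1 : ℝ) : ℂ)
    have h1 : ((1 * m 1 : ℕ) : ℝ) = 1 := by rw [hm1]; norm_num
    have hb1 : b 1 = (q : ℝ) ^ α := by
      show (q : ℝ) ^ (α * ((1 * m 1 : ℕ) : ℝ)) = _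
      rw [h1, mul_one]
    rw [hb1, hνs 0]
    norm_num
  have hR0 : RC 0 = 1 := by
    rw [hRCdef, hrdef]
    simp [hm0]
  have hstep : ∀ n : ℕ, (cC (n + 1) - cC n) * RC (n + 1) = BC (n + 2) - BC (n + 1) := by
    intro n
    show (((νs (n + 1) : ℝ) : ℂ) - ((νs n : ℝ) : ℂ)) * ((r (n + 1) : ℝ) : ℂ)
      = ((b (n + 2) : ℝ) : ℂ) - ((b (n + 1) : ℝ) : ℂ)
    exact_mod_cast hstepR n
  have htel := aux_tel cC BC RC hc0 hR0 hstep K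
  -- put everything together
  refine ⟨hint, ?_⟩
  have hterm : ∀ l ∈ Finset.range K, ∫ x in A l, f x ∂ν = -(cC l * (RC l - RC (l + 1))) := by
    intro l hl
    have hlK : l ≤ K := by simp at hl; omega
    have hlK1 : l + 1 ≤ K := by simp at hl; omega
    rw [hsmul l, hAf l, hAθ l, horth l hlK, horth (l + 1) hlK1]
    rw [hcCdef, hRCdef]
    ring
  have hlast : ∫ x in A K, f x ∂ν = -(cC K * RC K) := by
    rw [hsmul K, hAf K, hAθ K, horth K le_rfl, hVNint]
    rw [hcCdef, hRCdef]
    ring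
  calc ∫ x, f x ∂ν = ∑ l ∈ Finset.range (K + 1), ∫ x in A l, f x ∂ν := hmain
    _ = ∑ l ∈ Finset.range K, ∫ x in A l, f x ∂ν + ∫ x in A K, f x ∂ν :=
        Finset.sum_range_succ _ K
    _ = ∑ l ∈ Finset.range K, -(cC l * (RC l - RC (l + 1))) + -(cC K * RC K) := by
        rw [Finset.sum_congr rfl hterm, hlast]
    _ = -(∑ l ∈ Finset.range K, cC l * (RC l - RC (l + 1)) + cC K * RC K) := by
        rw [Finset.sum_neg_distrib, neg_add]
    _ = -(BC (K + 1)) := by rw [htel]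
    _ = -(((q : ℝ) ^ (α * (((K + 1) * m (K + 1) : ℕ) : ℝ)) : ℝ) : ℂ) := by
        rw [hBCdef, hbdef]
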